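/- Let g : Y → ℝ ∪ {−∞} be upper semicontinuous concave with nonempty compact set of maximizers Z, and let y⁰ satisfy: there exists η > dist(y⁰, Z) + σ with the ball {y : ‖y − y⁰‖ < 3η} contained in the domain where g is concave. Suppose yᵏ⁺¹ satisfies ‖yᵏ⁺¹ − pᵏ‖ ≤ ε_k where pᵏ = argmax { g(y) − (1/(2c_k))‖y − yᵏ‖² }, c_k ≥ 1, and Σε_k = σ < ∞. Then ‖yᵏ⁺¹ − y*₀‖ ≤ ‖yᵏ − y*₀‖ + ε_k for the projection y*₀ of y⁰ onto Z; in particular all iterates remain in the ball {y : ‖y − y*₀‖ < η + σ} and dist(yᵏ, Z) ≤ dist(y⁰,Z) + σ for all k. -/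

import Mathlib

/-- Stability of inexact proximal point iterations on a concave function: the iterates
stay near the solution set `Z` and drift at most by the summed errors. -/
theorem inexact_ppa_stay_in_ball
    {Y : Type*} [NormedAddCommGroup Y] [InnerProductSpace ℝ Y] [FiniteDimensional ℝ Y]
    (g : Y → EReal) (htop : ∀ w, g w ≠ ⊤)
    (husc : UpperSemicontinuous g)
    (Z : Set Y) (hZ : Z = {w | ∀ w', g w' ≤ g w})
    (hZne : Z.Nonempty) (hZcpt : IsCompact Z) (hZconv : Convex ℝ Z)
    (η σ : ℝ) (ε c : ℕ → ℝ) (y p : ℕ → Y)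
    (hconc : ∀ a ∈ Metric.ball (y 0) (3 * η), ∀ b ∈ Metric.ball (y 0) (3 * η),
      ∀ t : ℝ, 0 ≤ t → t ≤ 1 →
        (t : EReal) * g a + ((1 - t : ℝ) : EReal) * g b ≤ g (t • a + (1 - t) • b))
    (hη : Metric.infDist (y 0) Z + σ < η)
    (hc : ∀ k, 1 ≤ c k)
    (hε : ∀ k, 0 ≤ ε k) (hsummable : Summable ε) (hσ : ∑' k, ε k = σ)
    (hp : ∀ k, ∀ w : Y,
      g w + ((-(1 / (2 * c k)) * ‖w - y k‖ ^ 2 : ℝ) : EReal) ≤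
        g (p k) + ((-(1 / (2 * c k)) * ‖p k - y k‖ ^ 2 : ℝ) : EReal))
    (happrox : ∀ k, ‖y (k + 1) - p k‖ ≤ ε k)
    (ystar : Y) (hystar : ystar ∈ Z)
    (hproj : ‖y 0 - ystar‖ = Metric.infDist (y 0) Z) :
    (∀ k, ‖y (k + 1) - ystar‖ ≤ ‖y k - ystar‖ + ε k) ∧
    (∀ k, ‖y k - ystar‖ < η + σ) ∧
    (∀ k, Metric.infDist (y k) Z ≤ Metric.infDist (y 0) Z + σ) := by
  have hσ0 : 0 ≤ σ := hσ ▸ tsum_nonneg hε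
  have hd0 : 0 ≤ Metric.infDist (y 0) Z := Metric.infDist_nonneg
  have hη0 : 0 < η := by linarith
  have hmax : ∀ w, g w ≤ g ystar := by rw [hZ] at hystar; exact hystar
  by_cases hbot : g ystar = ⊥
  · -- degenerate: g ≡ ⊥, Z = univ, so Y is a subsingleton
    have hgbot : ∀ w, g w = ⊥ := fun w => le_bot_iff.mp (hbot ▸ hmax w)
    have hZuniv : Z = Set.univ := by
      rw [hZ]; ext w; simp [hgbot]
    have hsub : Subsingleton Y := by
      by_contra h
      rw [not_subsingleton_iff_nontrivial] at h
      obtain ⟨C, hC⟩ := hZcpt.isBounded.exists_norm_le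
      obtain ⟨x, hx⟩ := NormedSpace.exists_lt_norm ℝ Y C
      exact absurd (hC x (by rw [hZuniv]; trivial)) (not_le.mpr hx)
    have heq : ∀ k, y k = ystar := fun k => Subsingleton.elim _ _
    refine ⟨fun k => ?_, fun k => ?_, fun k => ?_⟩
    · simp [heq, hε k]
    · simp only [heq, sub_self, norm_zero]; linarith
    · rw [show y k = y 0 from Subsingleton.elim _ _]; linarith
  · -- main case
    obtain ⟨B, hB⟩ : ∃ B : ℝ, g ystar = (B : EReal) :=
      ⟨(g ystar).toReal, (EReal.coe_toReal (htop _) hbot).symm⟩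
    have hysball : ystar ∈ Metric.ball (y 0) (3 * η) := by
      rw [Metric.mem_ball, dist_eq_norm, norm_sub_rev, hproj]
      linarith
    have key : ∀ k, ‖y k - ystar‖ < η → ‖p k - ystar‖ ≤ ‖y k - ystar‖ := by
      intro k hk
      have hq : 0 < 1 / (2 * c k) := by
        have := hc k; positivity
      set q : ℝ := 1 / (2 * c k) with hqdef
      have h1 := hp k ystar
      rw [hB] at h1
      have hpkbot : g (p k) ≠ ⊥ := by
        intro h
        rw [h, EReal.bot_add, ← EReal.coe_add] at h1
        exact EReal.coe_ne_bot _ (le_bot_iff.mp h1)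
      obtain ⟨A, hA⟩ : ∃ A : ℝ, g (p k) = (A : EReal) :=
        ⟨(g (p k)).toReal, (EReal.coe_toReal (htop _) hpkbot).symm⟩
      rw [hA] at h1
      have h1' : B + (-q * ‖ystar - y k‖ ^ 2) ≤ A + (-q * ‖p k - y k‖ ^ 2) := by
        exact_mod_cast h1
      have hAB : A ≤ B := by
        have := hmax (p k); rw [hA, hB] at this; exact_mod_cast this
      have hsq1 : ‖p k - y k‖ ^ 2 ≤ ‖ystar - y k‖ ^ 2 := by nlinarith
      have hpyk : ‖p k - y k‖ ≤ ‖ystar - y k‖ := by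
        nlinarith [norm_nonneg (p k - y k), norm_nonneg (ystar - y k)]
      have hpball : p k ∈ Metric.ball (y 0) (3 * η) := by
        rw [Metric.mem_ball, dist_eq_norm]
        have t1 : ‖p k - y 0‖ ≤ ‖p k - y k‖ + ‖y k - ystar‖ + ‖ystar - y 0‖ := by
          have := norm_sub_le_norm_sub_add_norm_sub (p k) (y k) (y 0)
          have := norm_sub_le_norm_sub_add_norm_sub (y k) ystar (y 0)
          linarith
        have t2 : ‖ystar - y k‖ = ‖y k - ystar‖ := norm_sub_rev _ _
        have t3 : ‖ystar - y 0‖ < η := by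
          rw [norm_sub_rev, hproj]; linarith
        linarith
      by_cases hv : ystar - p k = 0
      · have hps : ystar = p k := by rwa [sub_eq_zero] at hv
        rw [← hps, sub_self, norm_zero]
        exact norm_nonneg _
      · have hstep : ∀ t : ℝ, 0 < t → t ≤ 1 →
            0 ≤ 2 * t * (inner ℝ (p k - y k) (ystar - p k) : ℝ) + t^2 * ‖ystar - p k‖^2 := by
          intro t ht0 ht1
          have hcv := hconc ystar hysball (p k) hpball t ht0.le ht1
          rw [hA, hB] at hcv
          set w : Y := t • ystar + (1 - t) • p k with hw
          have hcv' : ((t * B + (1 - t) * A : ℝ) : EReal) ≤ g w := by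
            calc ((t * B + (1 - t) * A : ℝ) : EReal)
                = (t : EReal) * (B : EReal) + ((1 - t : ℝ) : EReal) * (A : EReal) := by
                  norm_cast
              _ ≤ g w := hcv
          have hwbot : g w ≠ ⊥ := by
            intro h; rw [h] at hcv'
            exact EReal.coe_ne_bot _ (le_bot_iff.mp hcv')
          obtain ⟨C, hC⟩ : ∃ C : ℝ, g w = (C : EReal) :=
            ⟨(g w).toReal, (EReal.coe_toReal (htop _) hwbot).symm⟩
          have hCge : t * B + (1 - t) * A ≤ C := by
            rw [hC] at hcv'; exact_mod_cast hcv'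
          have h2 := hp k w
          rw [hA, hC] at h2
          have h2' : C + (-q * ‖w - y k‖ ^ 2) ≤ A + (-q * ‖p k - y k‖ ^ 2) := by
            exact_mod_cast h2
          have hAC : A ≤ C := by nlinarith
          have hnorm : ‖p k - y k‖^2 ≤ ‖w - y k‖^2 := by nlinarith
          have hwexp : w - y k = (p k - y k) + t • (ystar - p k) := by
            rw [hw]; module
          rw [hwexp, @norm_add_sq_real, real_inner_smul_right, norm_smul,
            Real.norm_eq_abs, mul_pow, sq_abs] at hnorm
          nlinarith
        have hip : 0 ≤ (inner ℝ (p k - y k) (ystar - p k) : ℝ) := by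
          by_contra h
          push_neg at h
          set ip : ℝ := (inner ℝ (p k - y k) (ystar - p k) : ℝ) with hipdef
          have hvn : 0 < ‖ystar - p k‖^2 := pow_pos (norm_pos_iff.mpr hv) 2
          set t : ℝ := min 1 (-ip / ‖ystar - p k‖^2) with ht
          have ht0 : 0 < t := lt_min one_pos (div_pos (neg_pos.mpr h) hvn)
          have ht1 : t ≤ 1 := min_le_left _ _
          have h2 := hstep t ht0 ht1
          have htv : t * ‖ystar - p k‖^2 ≤ -ip := by
            calc t * ‖ystar - p k‖^2 ≤ (-ip / ‖ystar - p k‖^2) * ‖ystar - p k‖^2 :=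
                  mul_le_mul_of_nonneg_right (min_le_right _ _) hvn.le
              _ = -ip := div_mul_cancel₀ _ (ne_of_gt hvn)
          nlinarith
        have hexp : y k - ystar = (y k - p k) + (p k - ystar) := by abel
        have hinner : (inner ℝ (y k - p k) (p k - ystar) : ℝ)
            = (inner ℝ (p k - y k) (ystar - p k) : ℝ) := by
          rw [show y k - p k = -(p k - y k) by abel, show p k - ystar = -(ystar - p k) by abel,
            inner_neg_neg]
        have h3 : ‖p k - ystar‖^2 ≤ ‖y k - ystar‖^2 := by
          rw [hexp, @norm_add_sq_real, hinner]
          nlinarith [sq_nonneg ‖y k - p k‖, hip]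
        nlinarith [norm_nonneg (p k - ystar), norm_nonneg (y k - ystar), h3]
    have step : ∀ k, ‖y k - ystar‖ < η → ‖y (k + 1) - ystar‖ ≤ ‖y k - ystar‖ + ε k := by
      intro k hk
      calc ‖y (k + 1) - ystar‖ ≤ ‖y (k + 1) - p k‖ + ‖p k - ystar‖ :=
            norm_sub_le_norm_sub_add_norm_sub _ _ _
        _ ≤ ε k + ‖y k - ystar‖ := add_le_add (happrox k) (key k hk)
        _ = ‖y k - ystar‖ + ε k := by ring
    have hpart : ∀ k, ∑ i ∈ Finset.range k, ε i ≤ σ := fun k =>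
      hσ ▸ Summable.sum_le_tsum (Finset.range k) (fun i _ => hε i) hsummable
    have Hb : ∀ k, ‖y k - ystar‖ ≤ ‖y 0 - ystar‖ + ∑ i ∈ Finset.range k, ε i := by
      intro k
      induction k with
      | zero => simp
      | succ n ih =>
        have hlt : ‖y n - ystar‖ < η := by
          have := hpart n
          rw [hproj] at *
          linarith
        have := step n hlt
        rw [Finset.sum_range_succ]
        linarith
    have hlt : ∀ k, ‖y k - ystar‖ < η := by
      intro k
      have := Hb k; have := hpart k
      rw [hproj] at *
      linarith
    refine ⟨fun k => step k (hlt k), fun k => lt_of_lt_of_le (hlt k) (by linarith), fun k => ?_⟩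
    have h1 : Metric.infDist (y k) Z ≤ ‖y k - ystar‖ := by
      rw [← dist_eq_norm]
      exact Metric.infDist_le_dist_of_mem hystar
    have := Hb k; have := hpart k
    rw [hproj] at *
    linarith
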